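/- Let Σ be a signed graph with n vertices, let μ ∉ {0,1,−1} be an eigenvalue of Σ with multiplicity k, and let t = n − k. If −μ² is not an eigenvalue of the underlying graph G of Σ, then n ≤ C(t+1, 2). -/

import Mathlib

open Matrix

theorem quadratic_bound_on_order {n : ℕ}
    (A : Matrix (Fin n) (Fin n) ℝ)
    (hsymm : A.IsSymm)
    (hentries : ∀ p q, A p q ∈ ({0, 1, -1} : Set ℝ))
    (hdiag : ∀ p, A p p = 0)
    (AG : Matrix (Fin n) (Fin n) ℝ) (hAG : AG = fun i j => |A i j|)
    (μ : ℝ) (hμ : μ ∉ ({0, 1, -1} : Set ℝ))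
    (heig : Module.End.HasEigenvalue (Matrix.toLin' A) μ)
    (hG : ¬ Module.End.HasEigenvalue (Matrix.toLin' AG) (-μ ^ 2))
    (k : ℕ) (hk : k = Module.finrank ℝ (Module.End.eigenspace (Matrix.toLin' A) μ))
    (t : ℕ) (ht : t = n - k) :
    n ≤ (t + 1).choose 2 := by
  classical
  set B : Matrix (Fin n) (Fin n) ℝ := A - μ • (1 : Matrix (Fin n) (Fin n) ℝ) with hB
  have hBsymm : ∀ p q, B p q = B q p := by
    intro p q
    have := congrFun (congrFun hsymm.eq p) q
    simp only [transpose_apply] at this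
    simp [hB, Matrix.sub_apply, Matrix.smul_apply, Matrix.one_apply, this, eq_comm]
  have hker : Module.End.eigenspace (Matrix.toLin' A) μ = LinearMap.ker (Matrix.toLin' B) := by
    ext x
    rw [Module.End.mem_eigenspace_iff, LinearMap.mem_ker]
    rw [Matrix.toLin'_apply, Matrix.toLin'_apply, hB, Matrix.sub_mulVec,
      Matrix.smul_mulVec, Matrix.one_mulVec, sub_eq_zero, eq_comm]
  -- rank of B
  have hrn := LinearMap.finrank_range_add_finrank_ker (Matrix.toLin' B)
  rw [Module.finrank_fintype_fun_eq_card, Fintype.card_fin] at hrn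
  rw [hker] at hk
  have hW : Module.finrank ℝ (LinearMap.range (Matrix.toLin' B)) = t := by omega
  -- basis of the column space
  let b : Module.Basis (Fin t) ℝ (LinearMap.range (Matrix.toLin' B)) :=
    Module.finBasisOfFinrankEq ℝ _ hW
  have hcol : ∀ p : Fin n, (fun i => B i p) ∈ LinearMap.range (Matrix.toLin' B) := by
    intro p
    exact ⟨Pi.single p 1, by rw [Matrix.toLin'_apply]; simp; rfl⟩
  let P : Matrix (Fin n) (Fin t) ℝ := fun i j => (b j : Fin n → ℝ) i
  let R : Matrix (Fin t) (Fin n) ℝ := fun j p => b.repr ⟨fun i => B i p, hcol p⟩ j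
  have hfact : B = P * R := by
    ext i p
    have := b.sum_repr ⟨fun i => B i p, hcol p⟩
    have h2 := congrFun (congrArg Subtype.val this) i
    simp only [Submodule.coe_sum, Submodule.coe_smul, Finset.sum_apply, Pi.smul_apply,
      smul_eq_mul] at h2
    rw [Matrix.mul_apply]
    rw [← h2]
    exact Finset.sum_congr rfl fun j _ => mul_comm _ _
  -- the key linear map
  have key : ∀ (γ : Fin n → ℝ) (i j : Fin t),
      (R * Matrix.diagonal γ * Rᵀ) i j = ∑ p, R i p * γ p * R j p := by
    intro γ i j
    rw [Matrix.mul_apply]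
    simp only [Matrix.mul_diagonal, Matrix.transpose_apply]
  let S := {p : Fin t × Fin t // p.1 ≤ p.2}
  let Φ : (Fin n → ℝ) →ₗ[ℝ] (S → ℝ) :=
    { toFun := fun α s => (R * Matrix.diagonal α * Rᵀ) s.1.1 s.1.2
      map_add' := by
        intro α β
        funext s
        simp only [Pi.add_apply]
        rw [key, key, key, ← Finset.sum_add_distrib]
        exact Finset.sum_congr rfl fun p _ => by simp [Pi.add_apply]; ring
      map_smul' := by
        intro c α
        funext s
        simp only [Pi.smul_apply, smul_eq_mul, RingHom.id_apply]
        rw [key, key, Finset.mul_sum]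
        exact Finset.sum_congr rfl fun p _ => by simp [Pi.smul_apply, smul_eq_mul]; ring }
  have hΦinj : Function.Injective Φ := by
    rw [← LinearMap.ker_eq_bot, LinearMap.ker_eq_bot']
    intro α h0
    -- the symmetric matrix M is zero
    set M := R * Matrix.diagonal α * Rᵀ with hM
    have hMsymm : Mᵀ = M := by
      rw [hM, Matrix.transpose_mul, Matrix.transpose_mul, Matrix.transpose_transpose,
        Matrix.diagonal_transpose, Matrix.mul_assoc]
    have hM0 : M = 0 := by
      ext i j
      rcases le_total i j with hij | hij
      · exact congrFun h0 ⟨(i, j), hij⟩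
      · have := congrFun h0 (⟨(j, i), hij⟩ : S)
        simp only [Pi.zero_apply] at this ⊢
        rw [← hMsymm]; exact this
    have hBDB : B * Matrix.diagonal α * B = 0 := by
      have hBT : Bᵀ = B := by ext i j; simp [transpose_apply, hBsymm]
      calc B * Matrix.diagonal α * B = (P * R) * Matrix.diagonal α * (P * R)ᵀ := by
            rw [← hfact, hBT]
        _ = P * M * Pᵀ := by
            rw [Matrix.transpose_mul, hM]
            simp only [Matrix.mul_assoc]
        _ = 0 := by rw [hM0, Matrix.mul_zero, Matrix.zero_mul]
    -- diagonal entries give the eigenvalue equation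
    have hsq : ∀ q p, B q p * α p * B p q = AG q p * α p + (if p = q then μ ^ 2 * α p else 0) := by
      intro q p
      rw [hBsymm p q]
      by_cases hpq : p = q
      · subst hpq
        simp [hB, Matrix.sub_apply, Matrix.smul_apply, Matrix.one_apply, hdiag p, hAG]
        ring
      · have h1 : B q p = A q p := by
          simp [hB, Matrix.sub_apply, Matrix.smul_apply, Matrix.one_apply, Ne.symm hpq]
        have h2 : A q p * A q p = |A q p| := by
          rcases hentries q p with h | h | h <;> rw [h] <;> norm_num
        rw [h1, hAG]
        simp [hpq]
        rw [← h2]; ring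
    have heigeq : AG.mulVec α = (-μ ^ 2) • α := by
      funext q
      have hq := congrFun (congrFun hBDB q) q
      rw [Matrix.mul_apply] at hq
      simp only [Matrix.mul_diagonal, Matrix.zero_apply] at hq
      have : ∑ p, (AG q p * α p + (if p = q then μ ^ 2 * α p else 0)) = 0 :=
        (Finset.sum_congr rfl fun p _ => (hsq q p).symm).trans hq
      rw [Finset.sum_add_distrib, Finset.sum_ite_eq' Finset.univ q (fun p => μ ^ 2 * α p)] at this
      simp only [Finset.mem_univ, if_true] at this
      have hmv : AG.mulVec α q = ∑ p, AG q p * α p := by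
        rw [Matrix.mulVec, dotProduct]
      rw [hmv, Pi.smul_apply, smul_eq_mul]
      linarith
    by_contra hα0
    exact hG (Module.End.hasEigenvalue_of_hasEigenvector
      ⟨Module.End.mem_eigenspace_iff.mpr (by rw [Matrix.toLin'_apply, heigeq]), hα0⟩)
  -- count dimensions
  have hle := LinearMap.finrank_le_finrank_of_injective hΦinj
  rw [Module.finrank_fintype_fun_eq_card, Module.finrank_fintype_fun_eq_card,
    Fintype.card_fin] at hle
  have hcard : Fintype.card S = (t + 1).choose 2 := by
    rw [← Fintype.card_congr (Sym2.sortEquiv (α := Fin t)), Sym2.card, Fintype.card_fin]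
  rwa [hcard] at hle
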